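/- Let d : ℕ → A be admissible and not eventually periodic. Then for every n ≥ 1, the number of distinct extender sets of words of length n is at most the product of the numbers of distinct follower and predecessor sets: |E(n)| ≤ |F(n)| · |P(n)|. -/

import Mathlib

namespace BetaShift

variable {A : Type*}

/-- The shift map: `(shift x) n = x (n+1)`. -/
def shift (x : ℕ → A) : ℕ → A := fun n => x (n + 1)

/-- Lexicographic order on one-sided sequences: `x = y`, or there is an index `i`
such that `x j = y j` for all `j < i` and `x i < y i`. -/
def SeqLe [LinearOrder A] (x y : ℕ → A) : Prop :=
  x = y ∨ ∃ i, (∀ j, j < i → x j = y j) ∧ x i < y i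

/-- A word `w` occurs in the sequence `x`. -/
def Occurs (w : List A) (x : ℕ → A) : Prop :=
  ∃ i : ℕ, ∀ j : Fin w.length, x (i + j) = w.get j

/-- `Complexity x n` is the number `Φ_n(x)` of distinct words of length `n` occurring in `x`. -/
noncomputable def Complexity (x : ℕ → A) (n : ℕ) : ℕ :=
  Set.ncard {w : List A | w.length = n ∧ Occurs w x}

/-- A sequence is eventually periodic if there are `p ≥ 1` and `N` with
`d (i + p) = d i` for all `i ≥ N`. -/
def EventuallyPeriodic (d : ℕ → A) : Prop :=
  ∃ p, 1 ≤ p ∧ ∃ N, ∀ i, N ≤ i → d (i + p) = d i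

/-- `(d)_k`, the `k`-letter prefix of the sequence `d`, as a word. -/
def prefixWord (d : ℕ → A) (k : ℕ) : List A := List.ofFn (fun i : Fin k => d i)

variable {m : ℕ}

/-- `d` is admissible: every shift of `d` is lexicographically ≤ `d`,
and `d` is not eventually `0`. -/
def Admissible (d : ℕ → Fin m) : Prop :=
  (∀ i, SeqLe (shift^[i] d) d) ∧ ∀ N, ∃ i, N ≤ i ∧ (d i).val ≠ 0

/-- The one-sided β-shift `X_d` determined by the admissible sequence `d`. -/
def XSet (d : ℕ → Fin m) : Set (ℕ → Fin m) :=
  {x | ∀ i, SeqLe (shift^[i] x) d}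

/-- The language of `X_d`: all words occurring in some point of `X_d`. -/
def Lang (d : ℕ → Fin m) : Set (List (Fin m)) :=
  {w | ∃ x ∈ XSet d, Occurs w x}

/-- The follower set of the word `w` in `X_d`. -/
def Fol (d : ℕ → Fin m) (w : List (Fin m)) : Set (List (Fin m)) :=
  {u | w ++ u ∈ Lang d}

/-- The predecessor set of the word `w` in `X_d`. -/
def Pred (d : ℕ → Fin m) (w : List (Fin m)) : Set (List (Fin m)) :=
  {s | s ++ w ∈ Lang d}

/-- The extender set of the word `w` in `X_d`. -/
def Ext (d : ℕ → Fin m) (w : List (Fin m)) : Set (List (Fin m) × List (Fin m)) :=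
  {p | p.1 ++ w ++ p.2 ∈ Lang d}

/-- `|F(n)|`: the number of distinct follower sets of words of length `n` in `X_d`. -/
noncomputable def FolCount (d : ℕ → Fin m) (n : ℕ) : ℕ :=
  Set.ncard {S | ∃ w ∈ Lang d, w.length = n ∧ S = Fol d w}

/-- `|P(n)|`: the number of distinct predecessor sets of words of length `n` in `X_d`. -/
noncomputable def PredCount (d : ℕ → Fin m) (n : ℕ) : ℕ :=
  Set.ncard {S | ∃ w ∈ Lang d, w.length = n ∧ S = Pred d w}

/-- `|E(n)|`: the number of distinct extender sets of words of length `n` in `X_d`. -/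
noncomputable def ExtCount (d : ℕ → Fin m) (n : ℕ) : ℕ :=
  Set.ncard {S | ∃ w ∈ Lang d, w.length = n ∧ S = Ext d w}

/-- The largest `k ≤ n` such that the `k`-letter prefix of `d` is a suffix of `v`
(`k = 0`, the empty prefix, always works). -/
def classIndex (d : ℕ → Fin m) (n : ℕ) (v : List (Fin m)) : ℕ :=
  Nat.findGreatest (fun k => prefixWord d k <:+ v) n

/-- Lexicographic comparison of (equal-length) words: `u = v`, or at the first
index where they differ, `u` takes the smaller value. -/
def WordLe [LinearOrder A] (u v : List A) : Prop :=
  u = v ∨ ∃ i, ∃ (hu : i < u.length) (hv : i < v.length),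
    (∀ j (hju : j < u.length) (hjv : j < v.length), j < i → u.get ⟨j, hju⟩ = v.get ⟨j, hjv⟩) ∧
    u.get ⟨i, hu⟩ < v.get ⟨i, hv⟩

end BetaShift

namespace Stmt18Aux
open BetaShift

open BetaShift

variable {m : ℕ} [NeZero m]
set_option linter.unusedSectionVars false

lemma shift_iter (x : ℕ → Fin m) (k : ℕ) : shift^[k] x = fun i => x (i + k) := by
  induction k with
  | zero => rfl
  | succ k ih =>
    rw [Function.iterate_succ_apply', ih]
    funext i
    show x (i + 1 + k) = x (i + (k + 1))
    congr 1
    omega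

lemma fin_pos_of_ne_zero {a : Fin m} (h : a ≠ 0) : 0 < a :=
  lt_of_le_of_ne (Fin.zero_le a) (Ne.symm h)

lemma sle_refl (x : ℕ → Fin m) : SeqLe x x := Or.inl rfl

lemma sle_trans {x y z : ℕ → Fin m} (h1 : SeqLe x y) (h2 : SeqLe y z) : SeqLe x z := by
  rcases h1 with rfl | ⟨i, hag, hlt⟩
  · exact h2
  rcases h2 with rfl | ⟨i', hag', hlt'⟩
  · exact Or.inr ⟨i, hag, hlt⟩
  rcases lt_trichotomy i i' with h | rfl | h
  · exact Or.inr ⟨i, fun j hj => (hag j hj).trans (hag' j (hj.trans h)), hlt.trans_eq (hag' i h)⟩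
  · exact Or.inr ⟨i, fun j hj => (hag j hj).trans (hag' j hj), hlt.trans hlt'⟩
  · exact Or.inr ⟨i', fun j hj => (hag j (hj.trans h)).trans (hag' j hj),
      ((hag i' h).symm ▸ hlt')⟩

/-- key derived inequality -/
lemma sle_le_of_agree {x y : ℕ → Fin m} (h : SeqLe x y) {k : ℕ}
    (hag : ∀ j, j < k → x j = y j) : x k ≤ y k := by
  rcases h with rfl | ⟨i, hag', hlt⟩
  · exact le_refl _
  rcases lt_trichotomy i k with h | rfl | h
  · exact absurd (hag i h) (ne_of_lt hlt)
  · exact le_of_lt hlt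
  · exact le_of_eq (hag' k h)

/-- if `x` agrees with `y` below `r` and is zero from `r` on, then `x ⪯ y`. -/
lemma sle_of_agree_zero {x y : ℕ → Fin m} {r : ℕ}
    (hag : ∀ j, j < r → x j = y j) (hz : ∀ j, r ≤ j → x j = 0) : SeqLe x y := by
  by_cases hxy : x = y
  · exact Or.inl hxy
  have hex : ∃ k, x k ≠ y k := by
    by_contra h
    push_neg at h
    exact hxy (funext h)
  set k := Nat.find hex with hk
  have hkd : x k ≠ y k := Nat.find_spec hex
  have hmin : ∀ j, j < k → x j = y j := fun j hj => by
    have := Nat.find_min hex hj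
    simpa using this
  have hrk : r ≤ k := by
    by_contra h
    push_neg at h
    exact hkd (hag k h)
  refine Or.inr ⟨k, hmin, ?_⟩
  have h0 : x k = 0 := hz k hrk
  rw [h0]
  exact fin_pos_of_ne_zero (by rw [h0] at hkd; exact (Ne.symm hkd))

/-- shifting preserves `⪯` when the first `r` coordinates agree. -/
lemma sle_shift {x y : ℕ → Fin m} (h : SeqLe x y) {r : ℕ}
    (hag : ∀ j, j < r → x j = y j) : SeqLe (shift^[r] x) (shift^[r] y) := by
  rcases h with rfl | ⟨i, hag', hlt⟩
  · exact sle_refl _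
  have hir : r ≤ i := by
    by_contra h
    push_neg at h
    exact (ne_of_lt hlt) (hag i h)
  rw [shift_iter, shift_iter]
  refine Or.inr ⟨i - r, fun j hj => hag' (j + r) (by omega), ?_⟩
  show x (i - r + r) < y (i - r + r)
  have : i - r + r = i := by omega
  rw [this]
  exact hlt

/-- unshifting: if shifts compare and the first `r` coordinates agree, the originals compare. -/
lemma sle_unshift {x y : ℕ → Fin m} {r : ℕ} (h : SeqLe (shift^[r] x) (shift^[r] y))
    (hag : ∀ j, j < r → x j = y j) : SeqLe x y := by
  rw [shift_iter, shift_iter] at h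
  rcases h with h | ⟨i, hag', hlt⟩
  · refine Or.inl (funext fun j => ?_)
    rcases lt_or_ge j r with hj | hj
    · exact hag j hj
    · have := congrFun h (j - r)
      simpa [Nat.sub_add_cancel hj] using this
  · refine Or.inr ⟨i + r, fun j hj => ?_, hlt⟩
    rcases lt_or_ge j r with hjr | hjr
    · exact hag j hjr
    · have := hag' (j - r) (by omega)
      simpa [Nat.sub_add_cancel hjr] using this

/-- Extension of a word by zeros. -/
def ext0 (u : List (Fin m)) : ℕ → Fin m := fun i => u.getD i 0

lemma ext0_lt {u : List (Fin m)} {j : ℕ} (h : j < u.length) : ext0 u j = u.get ⟨j, h⟩ :=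
  List.getD_eq_get u 0 ⟨j, h⟩

lemma ext0_ge {u : List (Fin m)} {j : ℕ} (h : u.length ≤ j) : ext0 u j = 0 :=
  List.getD_eq_default u 0 h

lemma ext0_append_left {u v : List (Fin m)} {j : ℕ} (h : j < u.length) :
    ext0 (u ++ v) j = ext0 u j := List.getD_append u v 0 j h

lemma ext0_append_right {u v : List (Fin m)} {j : ℕ} (h : u.length ≤ j) :
    ext0 (u ++ v) j = ext0 v (j - u.length) := List.getD_append_right u v 0 j h

lemma ext0_append_add {u v : List (Fin m)} (j : ℕ) :
    ext0 (u ++ v) (u.length + j) = ext0 v j := by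
  rw [ext0_append_right (by omega)]
  congr 1
  omega

lemma ext0_drop (u : List (Fin m)) (i j : ℕ) : ext0 (u.drop i) j = ext0 u (i + j) := by
  rcases lt_or_ge (i + j) u.length with h | h
  · rw [ext0_lt (by rw [List.length_drop]; omega), ext0_lt h]
    simp
  · rw [ext0_ge (by rw [List.length_drop]; omega), ext0_ge h]

variable (d : ℕ → Fin m)

/-- The window `d[t, t+q)` as a word. -/
def win (t q : ℕ) : List (Fin m) := List.ofFn (fun i : Fin q => d (t + i))

lemma win_length (t q : ℕ) : (win d t q).length = q := List.length_ofFn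

lemma ext0_win_lt {t q j : ℕ} (h : j < q) : ext0 (win d t q) j = d (t + j) := by
  rw [ext0_lt (by rw [win_length]; exact h)]
  simp [win, List.get_ofFn]

lemma pw_eq_win (k : ℕ) : prefixWord d k = win d 0 k := by
  unfold prefixWord win
  congr 1
  funext i
  rw [Nat.zero_add]

lemma pw_length (k : ℕ) : (prefixWord d k).length = k := List.length_ofFn

lemma ext0_pw_lt {k j : ℕ} (h : j < k) : ext0 (prefixWord d k) j = d j := by
  rw [pw_eq_win]
  rw [ext0_win_lt d h, Nat.zero_add]

variable {d} (hd : Admissible d)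
include hd

/-- the all-zero tail: `d` is not eventually zero. -/
lemma exists_nonzero (N : ℕ) : ∃ i, N ≤ i ∧ d i ≠ 0 := by
  obtain ⟨i, hi, hne⟩ := hd.2 N
  exact ⟨i, hi, fun h => hne (by rw [h]; rfl)⟩

/-- `ext0` of any word with entries matching `σ^t d` below its length is `⪯ σ^t d`. -/
lemma sle_of_matches {u : List (Fin m)} {t : ℕ}
    (h : ∀ j, j < u.length → ext0 u j = d (t + j)) : SeqLe (ext0 u) (shift^[t] d) := by
  rw [shift_iter]
  exact sle_of_agree_zero
    (fun j hj => by rw [h j hj]; ring_nf)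
    (fun j hj => ext0_ge hj)

/-- The language characterization: `w ∈ Lang d` iff every zero-extended suffix is `⪯ d`. -/
lemma lang_iff (w : List (Fin m)) :
    w ∈ Lang d ↔ ∀ i, SeqLe (ext0 (w.drop i)) d := by
  constructor
  · rintro ⟨x, hx, a, ha⟩ i
    refine sle_trans ?_ (by simpa using hx (a + i))
    rw [shift_iter]
    refine sle_of_agree_zero (fun j hj => ?_) (fun j hj => ext0_ge hj)
    rw [List.length_drop] at hj
    rw [ext0_drop, ext0_lt (by omega : i + j < w.length)]
    have := ha ⟨i + j, by omega⟩
    simp only at this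
    rw [← this]
    congr 1
    omega
  · intro h
    refine ⟨ext0 w, fun i => ?_, 0, fun j => ?_⟩
    · have : shift^[i] (ext0 w) = ext0 (w.drop i) := by
        funext j
        rw [shift_iter]
        show ext0 w (j + i) = _
        rw [ext0_drop]
        congr 1
        omega
      rw [this]
      exact h i
    · rw [Nat.zero_add, ext0_lt j.isLt]

/-- every window of `d` is in the language. -/
lemma win_mem_lang (a q : ℕ) : win d a q ∈ Lang d := by
  rw [lang_iff hd]
  intro i
  refine sle_trans (sle_of_matches hd (t := a + i) fun j hj => ?_) (hd.1 (a + i))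
  rw [List.length_drop, win_length] at hj
  rw [ext0_drop, ext0_win_lt d (by omega)]
  congr 1
  omega

lemma pw_mem_lang (k : ℕ) : prefixWord d k ∈ Lang d := by
  rw [pw_eq_win]
  exact win_mem_lang hd 0 k

omit hd in
/-- `classIndex` with bound = length; basic facts. -/
lemma ci_suffix (v : List (Fin m)) : prefixWord d (classIndex d v.length v) <:+ v := by
  have h0 : prefixWord d 0 <:+ v := by
    have : prefixWord d 0 = ([] : List (Fin m)) := List.ofFn_zero
    rw [this]; exact List.nil_suffix
  exact Nat.findGreatest_spec (P := fun k => prefixWord d k <:+ v) (Nat.zero_le _) h0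

omit hd in
lemma ci_le (v : List (Fin m)) : classIndex d v.length v ≤ v.length :=
  Nat.findGreatest_le _

omit hd in
lemma ci_ge {v : List (Fin m)} {k : ℕ} (hk : k ≤ v.length) (h : prefixWord d k <:+ v) :
    k ≤ classIndex d v.length v := Nat.le_findGreatest hk h

omit hd in
/-- among suffixes of the same list, shorter is a suffix of longer. -/
lemma suffix_of_suffix_le {l₁ l₂ v : List (Fin m)} (h1 : l₁ <:+ v) (h2 : l₂ <:+ v)
    (hl : l₁.length ≤ l₂.length) : l₁ <:+ l₂ := by
  obtain ⟨a, rfl⟩ := h1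
  obtain ⟨b, hb⟩ := h2
  have hab : b.length ≤ a.length := by
    have := congrArg List.length hb
    simp only [List.length_append] at this
    omega
  have h3 : l₁ = List.drop (a.length - b.length) l₂ := by
    have h4 : List.drop a.length (a ++ l₁) = l₁ := List.drop_left
    rw [← h4, ← hb]
    calc List.drop a.length (b ++ l₂)
        = List.drop (a.length - b.length) (List.drop b.length (b ++ l₂)) := by
          rw [List.drop_drop]; congr 1; omega
      _ = List.drop (a.length - b.length) l₂ := by rw [List.drop_left]
  rw [h3]
  exact List.drop_suffix _ _

/-- chain lemma: if `(d)_r` is a suffix of `(d)_c` then `σ^c d ⪯ σ^r d`. -/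
lemma chain_lemma {r c : ℕ} (hrc : r ≤ c) (hsuf : prefixWord d r <:+ prefixWord d c) :
    SeqLe (shift^[c] d) (shift^[r] d) := by
  -- entries: d (c - r + q) = d q for q < r
  have hent : ∀ q, q < r → d (c - r + q) = d q := by
    intro q hq
    obtain ⟨z, hz⟩ := hsuf
    have hzl : z.length = c - r := by
      have := congrArg List.length hz
      simp only [List.length_append, pw_length] at this
      omega
    have h1 : ext0 (prefixWord d c) (c - r + q) = d (c - r + q) :=
      ext0_pw_lt d (by omega)
    have h2 : ext0 (z ++ prefixWord d r) (c - r + q) = d q := by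
      rw [← hzl, ext0_append_add, ext0_pw_lt d hq]
    rw [← h1, ← hz, h2]
  have h1 : SeqLe (shift^[c - r] d) d := hd.1 (c - r)
  have h2 : SeqLe (shift^[r] (shift^[c - r] d)) (shift^[r] d) := by
    refine sle_shift h1 (fun j hj => ?_)
    rw [shift_iter]
    show d (j + (c - r)) = d j
    rw [Nat.add_comm]
    exact hent j hj
  have h3 : shift^[r] (shift^[c - r] d) = shift^[c] d := by
    funext j
    simp only [shift_iter]
    congr 1
    omega
  rwa [h3] at h2

/-- MASTER LEMMA: appending characterization. -/
lemma append_mem_iff (v u : List (Fin m)) :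
    v ++ u ∈ Lang d ↔ v ∈ Lang d ∧ u ∈ Lang d ∧
      SeqLe (ext0 u) (shift^[classIndex d v.length v] d) := by
  set n := v.length with hn
  set c := classIndex d v.length v with hc
  constructor
  · intro h
    rw [lang_iff hd] at h
    refine ⟨?_, ?_, ?_⟩
    · rw [lang_iff hd]
      intro i
      refine sle_trans ?_ (h i)
      refine sle_of_agree_zero (fun j hj => ?_) (fun j hj => ext0_ge hj)
      rw [List.length_drop] at hj
      rw [ext0_drop, ext0_drop, ext0_append_left (by omega)]
    · rw [lang_iff hd]
      intro i
      have : ext0 (u.drop i) = ext0 ((v ++ u).drop (n + i)) := by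
        funext j
        rw [ext0_drop, ext0_drop]
        have : n + i + j = n + (i + j) := by omega
        rw [this, hn, ext0_append_add]
      rw [this]
      exact h (n + i)
    · obtain ⟨z, hz⟩ := ci_suffix (d := d) v
      have hzl : z.length = n - c := by
        have := congrArg List.length hz
        simp only [List.length_append, pw_length] at this
        omega
      have hcn : c ≤ n := ci_le v
      have hx := h z.length
      have hagree : ∀ j, j < c → ext0 ((v ++ u).drop z.length) j = d j := by
        intro j hj
        rw [ext0_drop, ext0_append_left (by omega), ← hz, ext0_append_add, ext0_pw_lt d hj]
      have h2 := sle_shift hx hagree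
      have h3 : shift^[c] (ext0 ((v ++ u).drop z.length)) = ext0 u := by
        funext j
        simp only [shift_iter]
        rw [ext0_drop]
        have : z.length + (j + c) = n + j := by omega
        rw [this, hn, ext0_append_add]
      rwa [h3] at h2
  · rintro ⟨hv, hu, hdom⟩
    rw [lang_iff hd] at hv hu ⊢
    intro i
    rcases le_or_gt n i with hi | hi
    · have : ext0 ((v ++ u).drop i) = ext0 (u.drop (i - n)) := by
        funext j
        rw [ext0_drop, ext0_drop]
        have : i + j = n + (i - n + j) := by omega
        rw [this, hn, ext0_append_add]
      rw [this]
      exact hu (i - n)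
    · set r := n - i with hr
      by_cases hcase : ∀ j, j < r → ext0 v (i + j) = d j
      · -- drop i v equals the prefix word of length r
        have hpr : prefixWord d r <:+ v := by
          have heq : v.drop i = prefixWord d r := by
            refine List.ext_get (by rw [List.length_drop, pw_length]) (fun j h₁ h₂ => ?_)
            have hj2 : j < r := by rw [pw_length] at h₂; exact h₂
            have e1 : (v.drop i).get ⟨j, h₁⟩ = ext0 (v.drop i) j := (ext0_lt h₁).symm
            have e2 : (prefixWord d r).get ⟨j, h₂⟩ = ext0 (prefixWord d r) j := (ext0_lt h₂).symm
            rw [e1, e2, ext0_drop, hcase j hj2, ext0_pw_lt d hj2]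
          rw [← heq]
          exact List.drop_suffix i v
        have hrc : r ≤ c := ci_ge (by omega) hpr
        have hsuf2 : prefixWord d r <:+ prefixWord d c :=
          suffix_of_suffix_le hpr (ci_suffix (d := d) v) (by rw [pw_length, pw_length]; omega)
        have hdom2 : SeqLe (ext0 u) (shift^[r] d) :=
          sle_trans hdom (chain_lemma hd hrc hsuf2)
        -- now build the goal via unshift
        refine sle_unshift (r := r) ?_ (fun j hj => ?_)
        · have hsx : shift^[r] (ext0 ((v ++ u).drop i)) = ext0 u := by
            funext j
            simp only [shift_iter]
            rw [ext0_drop]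
            have : i + (j + r) = n + j := by omega
            rw [this, hn, ext0_append_add]
          rw [hsx]
          exact hdom2
        · rw [ext0_drop, ext0_append_left (by omega)]
          exact hcase j hj
      · push_neg at hcase
        obtain ⟨j₀, hj₀, hne⟩ := hcase
        have hex : ∃ j, ext0 v (i + j) ≠ d j := ⟨j₀, hne⟩
        set p := Nat.find hex with hp
        have hpd : ext0 v (i + p) ≠ d p := Nat.find_spec hex
        have hmin : ∀ q, q < p → ext0 v (i + q) = d q := by
          intro q hq
          have := Nat.find_min hex hq
          simpa using this
        have hpr : p < r := by
          have : p ≤ j₀ := Nat.find_min' hex hne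
          omega
        have hvi := hv i
        have hlt : ext0 v (i + p) < d p := by
          refine lt_of_le_of_ne ?_ hpd
          have := sle_le_of_agree hvi (k := p) (fun q hq => by rw [ext0_drop]; exact hmin q hq)
          rwa [ext0_drop] at this
        refine Or.inr ⟨p, fun q hq => ?_, ?_⟩
        · rw [ext0_drop, ext0_append_left (by omega)]
          exact hmin q hq
        · rw [ext0_drop, ext0_append_left (by omega)]
          exact hlt

/-- follower sets via the class index. -/
lemma fol_eq {v : List (Fin m)} (hv : v ∈ Lang d) :
    Fol d v = {u | u ∈ Lang d ∧ SeqLe (ext0 u) (shift^[classIndex d v.length v] d)} := by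
  ext u
  show v ++ u ∈ Lang d ↔ _
  rw [append_mem_iff hd]
  simp only [Set.mem_setOf_eq]
  exact ⟨fun h => ⟨h.2.1, h.2.2⟩, fun h => ⟨hv, h.1, h.2⟩⟩

/-- extender sets via the class index. -/
lemma ext_mem_iff (w : List (Fin m)) (s u : List (Fin m)) :
    (s, u) ∈ Ext d w ↔ s ++ w ∈ Lang d ∧ u ∈ Lang d ∧
      SeqLe (ext0 u) (shift^[classIndex d (s ++ w).length (s ++ w)] d) := by
  exact append_mem_iff hd (s ++ w) u

omit hd in
lemma ext_pred (w : List (Fin m)) :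
    {s | (s, ([] : List (Fin m))) ∈ Ext d w} = Pred d w := by
  ext s
  show s ++ w ++ [] ∈ Lang d ↔ s ++ w ∈ Lang d
  rw [List.append_nil]

omit hd in
lemma ext_fol (w : List (Fin m)) :
    {u | (([] : List (Fin m)), u) ∈ Ext d w} = Fol d w := by
  ext u
  show [] ++ w ++ u ∈ Lang d ↔ w ++ u ∈ Lang d
  rw [List.nil_append]

/-- injectivity of constraint sets, from non-periodicity. -/
lemma G_inj (hnp : ¬ EventuallyPeriodic d) {a b : ℕ}
    (h : {u : List (Fin m) | u ∈ Lang d ∧ SeqLe (ext0 u) (shift^[a] d)} =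
         {u : List (Fin m) | u ∈ Lang d ∧ SeqLe (ext0 u) (shift^[b] d)}) : a = b := by
  have key : ∀ a' b', {u : List (Fin m) | u ∈ Lang d ∧ SeqLe (ext0 u) (shift^[a'] d)} ⊆
      {u : List (Fin m) | u ∈ Lang d ∧ SeqLe (ext0 u) (shift^[b'] d)} →
      ∀ j, (∀ q, q < j → d (a' + q) = d (b' + q)) → d (a' + j) ≤ d (b' + j) := by
    intro a' b' hsub j hag
    have h1 : win d a' (j + 1) ∈ Lang d := win_mem_lang hd a' (j + 1)
    have h2 : SeqLe (ext0 (win d a' (j + 1))) (shift^[a'] d) := by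
      refine sle_of_matches hd (fun q hq => ?_)
      rw [win_length] at hq
      exact ext0_win_lt d hq
    have h3 := hsub ⟨h1, h2⟩
    have h4 : SeqLe (ext0 (win d a' (j + 1))) (shift^[b'] d) := h3.2
    have h5 := sle_le_of_agree h4 (k := j) (fun q hq => by
      rw [ext0_win_lt d (by omega), shift_iter]
      show d (a' + q) = d (q + b')
      rw [hag q hq]; ring_nf)
    rw [ext0_win_lt d (by omega), shift_iter] at h5
    show d (a' + j) ≤ d (b' + j)
    calc d (a' + j) ≤ d (j + b') := h5
      _ = d (b' + j) := by ring_nf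
  have hentry : ∀ j, d (a + j) = d (b + j) := by
    intro j
    induction j using Nat.strong_induction_on with
    | _ j ih =>
      exact le_antisymm (key a b (le_of_eq h) j ih)
        (key b a (ge_of_eq h) j (fun q hq => (ih q hq).symm))
  rcases lt_trichotomy a b with hab | hab | hab
  · exfalso
    refine hnp ⟨b - a, by omega, a, fun i hi => ?_⟩
    have := hentry (i - a)
    have e1 : a + (i - a) = i := by omega
    have e2 : b + (i - a) = i + (b - a) := by omega
    rw [e1, e2] at this
    exact this.symm
  · exact hab
  · exfalso
    refine hnp ⟨a - b, by omega, b, fun i hi => ?_⟩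
    have := hentry (i - b)
    have e1 : b + (i - b) = i := by omega
    have e2 : a + (i - b) = i + (a - b) := by omega
    rw [e2, e1] at this
    exact this

omit hd in
/-- the class index of `s ++ w` either equals that of `w` or exceeds `|w|`. -/
lemma ci_append_cases (s w : List (Fin m)) :
    classIndex d (s ++ w).length (s ++ w) = classIndex d w.length w ∨
      w.length < classIndex d (s ++ w).length (s ++ w) := by
  set t := classIndex d (s ++ w).length (s ++ w) with ht
  set c₀ := classIndex d w.length w with hc₀
  have hsw : prefixWord d c₀ <:+ s ++ w :=
    (ci_suffix (d := d) w).trans (List.suffix_append s w)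
  have hc₀t : c₀ ≤ t := by
    refine ci_ge ?_ hsw
    have := ci_le (d := d) w
    rw [List.length_append]
    omega
  rcases le_or_gt t w.length with hle | hlt
  · left
    have hsuf : prefixWord d t <:+ w := by
      refine suffix_of_suffix_le (ci_suffix (d := d) (s ++ w)) (List.suffix_append s w) ?_
      rw [pw_length]
      exact hle
    have : t ≤ c₀ := ci_ge hle hsuf
    omega
  · right
    exact hlt

def ActiveW (d : ℕ → Fin m) (w : List (Fin m)) : Prop :=
  ∃ s, s ++ w ∈ Lang d ∧
    classIndex d (s ++ w).length (s ++ w) ≠ classIndex d w.length w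

omit hd in
lemma inactive_ci {w : List (Fin m)} (hna : ¬ ActiveW d w) :
    ∀ s, s ++ w ∈ Lang d → classIndex d (s ++ w).length (s ++ w) = classIndex d w.length w :=
  fun s hs => by by_contra h; exact hna ⟨s, hs, h⟩

/-- an active word of length `n` is a window at some positive position. -/
lemma active_window {w : List (Fin m)} {n : ℕ} (hl : w.length = n)
    (ha : ActiveW d w) :
    ∃ i₁, 1 ≤ i₁ ∧ prefixWord d (i₁ + n) = prefixWord d i₁ ++ w := by
  obtain ⟨s, hs, hne⟩ := ha
  set t := classIndex d (s ++ w).length (s ++ w) with ht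
  have hlt : n < t := by
    rcases ci_append_cases (d := d) s w with h | h
    · exact absurd h hne
    · omega
  have hsuf : prefixWord d t <:+ s ++ w := ci_suffix (d := d) (s ++ w)
  have hwsuf : w <:+ prefixWord d t := by
    refine suffix_of_suffix_le (List.suffix_append s w) hsuf ?_
    rw [pw_length]
    omega
  obtain ⟨z, hz⟩ := hwsuf
  have hzl : z.length = t - n := by
    have := congrArg List.length hz
    simp only [List.length_append, pw_length] at this
    omega
  refine ⟨t - n, by omega, ?_⟩
  have hpz : z = prefixWord d (t - n) := by
    refine List.ext_get (by rw [pw_length]; omega) (fun j hj1 hj2 => ?_)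
    have hjt : j < t - n := by omega
    have e1 : z.get ⟨j, hj1⟩ = ext0 (z ++ w) j := by
      rw [ext0_append_left (by omega), ext0_lt hj1]
    have e2 : (prefixWord d (t - n)).get ⟨j, hj2⟩ = ext0 (prefixWord d (t - n)) j :=
      (ext0_lt hj2).symm
    rw [e1, e2, hz, ext0_pw_lt d hjt, ext0_pw_lt d (by omega)]
  have : t - n + n = t := by omega
  rw [this, ← hz, hpz]

/-- one-sided domination coming from an occurrence of `w₁` in `d`. -/
lemma dom_step {i₁ n : ℕ} {w₁ w₂ : List (Fin m)} (h1 : w₁.length = n) (h2 : w₂.length = n)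
    (occ : ∀ j, j < n → ext0 w₁ j = d (i₁ + j))
    (hs : prefixWord d i₁ ++ w₂ ∈ Lang d) :
    ∀ j, j < n → (∀ q, q < j → ext0 w₂ q = ext0 w₁ q) → ext0 w₂ j ≤ ext0 w₁ j := by
  intro j hj hag
  rw [lang_iff hd] at hs
  have hx := hs 0
  rw [List.drop_zero] at hx
  have hagq : ∀ q, q < i₁ + j → ext0 (prefixWord d i₁ ++ w₂) q = d q := by
    intro q hq
    rcases lt_or_ge q i₁ with hqi | hqi
    · rw [ext0_append_left (by rw [pw_length]; omega), ext0_pw_lt d hqi]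
    · have e1 : q = (prefixWord d i₁).length + (q - i₁) := by rw [pw_length]; omega
      rw [e1, ext0_append_add, hag (q - i₁) (by omega), occ (q - i₁) (by omega)]
      congr 1
      omega
  have hkey := sle_le_of_agree hx hagq
  have e1 : ext0 (prefixWord d i₁ ++ w₂) (i₁ + j) = ext0 w₂ j := by
    have e2 : i₁ + j = (prefixWord d i₁).length + j := by rw [pw_length]
    rw [e2, ext0_append_add]
  rw [e1] at hkey
  rw [occ j hj]
  exact hkey

omit hd in
lemma eq_of_dom_both {n : ℕ} {w₁ w₂ : List (Fin m)} (h1 : w₁.length = n) (h2 : w₂.length = n)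
    (dom12 : ∀ j, j < n → (∀ q, q < j → ext0 w₂ q = ext0 w₁ q) → ext0 w₂ j ≤ ext0 w₁ j)
    (dom21 : ∀ j, j < n → (∀ q, q < j → ext0 w₁ q = ext0 w₂ q) → ext0 w₁ j ≤ ext0 w₂ j) :
    w₁ = w₂ := by
  have key : ∀ j, j < n → ext0 w₁ j = ext0 w₂ j := by
    intro j
    induction j using Nat.strong_induction_on with
    | _ j ih =>
      intro hj
      exact le_antisymm (dom21 j hj (fun q hq => ih q hq (by omega)))
        (dom12 j hj (fun q hq => (ih q hq (by omega)).symm))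
  refine List.ext_get (by omega) (fun j hj1 hj2 => ?_)
  rw [← ext0_lt hj1, ← ext0_lt hj2]
  exact key j (by omega)

/-- Case A: both inactive. -/
lemma caseA (hnp : ¬ EventuallyPeriodic d) {w w' : List (Fin m)}
    (hw : w ∈ Lang d) (hw' : w' ∈ Lang d)
    (hFol : Fol d w = Fol d w') (hPred : Pred d w = Pred d w')
    (hNA : ¬ ActiveW d w) (hNA' : ¬ ActiveW d w') : Ext d w = Ext d w' := by
  have hc : classIndex d w.length w = classIndex d w'.length w' := by
    apply G_inj hd hnp
    rw [← fol_eq hd hw, ← fol_eq hd hw', hFol]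
  ext ⟨s, u⟩
  rw [ext_mem_iff hd, ext_mem_iff hd]
  constructor
  · rintro ⟨hsw, hu, hdom⟩
    have hsw' : s ++ w' ∈ Lang d := by
      have h1 : s ∈ Pred d w := hsw
      rw [hPred] at h1
      exact h1
    refine ⟨hsw', hu, ?_⟩
    rw [inactive_ci hNA' s hsw', ← hc, ← inactive_ci hNA s hsw]
    exact hdom
  · rintro ⟨hsw', hu, hdom⟩
    have hsw : s ++ w ∈ Lang d := by
      have h1 : s ∈ Pred d w' := hsw'
      rw [← hPred] at h1
      exact h1
    refine ⟨hsw, hu, ?_⟩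
    rw [inactive_ci hNA s hsw, hc, ← inactive_ci hNA' s hsw']
    exact hdom

/-- occurrence entries from a window identity -/
lemma occ_of_window {w : List (Fin m)} {n i₁ : ℕ} (hl : w.length = n)
    (hpw : prefixWord d (i₁ + n) = prefixWord d i₁ ++ w) :
    ∀ j, j < n → ext0 w j = d (i₁ + j) := by
  intro j hj
  have e := congrArg (fun l => ext0 l (i₁ + j)) hpw
  rw [ext0_pw_lt d (by omega)] at e
  have e3 : ext0 (prefixWord d i₁ ++ w) (i₁ + j) = ext0 w j := by
    have e2 : i₁ + j = (prefixWord d i₁).length + j := by rw [pw_length]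
    rw [e2, ext0_append_add]
  rw [e3] at e
  exact e.symm

/-- Case B: both active. -/
lemma caseB {n : ℕ} {w₁ w₂ : List (Fin m)}
    (hw₁ : w₁ ∈ Lang d) (hw₂ : w₂ ∈ Lang d) (hl₁ : w₁.length = n) (hl₂ : w₂.length = n)
    (hPred : Pred d w₁ = Pred d w₂)
    (hA₁ : ActiveW d w₁) (hA₂ : ActiveW d w₂) : w₁ = w₂ := by
  obtain ⟨i₁, hi₁, hpw₁⟩ := active_window hd hl₁ hA₁
  obtain ⟨i₂, hi₂, hpw₂⟩ := active_window hd hl₂ hA₂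
  have occ₁ := occ_of_window hd hl₁ hpw₁
  have occ₂ := occ_of_window hd hl₂ hpw₂
  have hs₁ : prefixWord d i₁ ++ w₁ ∈ Lang d := by
    rw [← hpw₁]; exact pw_mem_lang hd _
  have hs₂ : prefixWord d i₂ ++ w₂ ∈ Lang d := by
    rw [← hpw₂]; exact pw_mem_lang hd _
  have hs₁' : prefixWord d i₁ ++ w₂ ∈ Lang d := by
    have h1 : prefixWord d i₁ ∈ Pred d w₁ := hs₁
    rw [hPred] at h1
    exact h1
  have hs₂' : prefixWord d i₂ ++ w₁ ∈ Lang d := by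
    have h1 : prefixWord d i₂ ∈ Pred d w₂ := hs₂
    rw [← hPred] at h1
    exact h1
  exact eq_of_dom_both hl₁ hl₂ (dom_step hd hl₁ hl₂ occ₁ hs₁') (dom_step hd hl₂ hl₁ occ₂ hs₂')

omit hd in
lemma ci_pw (n : ℕ) : classIndex d (prefixWord d n).length (prefixWord d n) = n := by
  rw [pw_length]
  have h1 : classIndex d n (prefixWord d n) ≤ n := by
    have := ci_le (d := d) (prefixWord d n)
    rwa [pw_length] at this
  have h2 : n ≤ classIndex d n (prefixWord d n) := by
    have := ci_ge (d := d) (v := prefixWord d n) (k := n)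
      (le_of_eq (pw_length d n).symm) (List.suffix_refl _)
    rwa [pw_length] at this
  omega

/-- Case C: active vs inactive, where the inactive follower class is that of `(d)_n`. -/
lemma caseC (hnp : ¬ EventuallyPeriodic d) {n : ℕ} {w₁ w' : List (Fin m)}
    (hw₁ : w₁ ∈ Lang d) (hl₁ : w₁.length = n) (hw' : w' ∈ Lang d) (hl' : w'.length = n)
    (hPred : Pred d w₁ = Pred d w')
    (hA : ActiveW d w₁) (hFol : Fol d (prefixWord d n) = Fol d w') : w₁ = w' := by
  have hc : classIndex d (prefixWord d n).length (prefixWord d n) =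
      classIndex d w'.length w' := by
    apply G_inj hd hnp
    rw [← fol_eq hd (pw_mem_lang hd n), ← fol_eq hd hw', hFol]
  have hcn : classIndex d w'.length w' = n := by rw [← hc, ci_pw]
  have hw'eq : w' = prefixWord d n := by
    have hsuf := ci_suffix (d := d) w'
    rw [hcn] at hsuf
    exact (hsuf.eq_of_length (by rw [pw_length, hl'])).symm
  obtain ⟨i₁, hi₁, hpw₁⟩ := active_window hd hl₁ hA
  have occ₁ := occ_of_window hd hl₁ hpw₁
  have hs₁ : prefixWord d i₁ ++ w₁ ∈ Lang d := by
    rw [← hpw₁]; exact pw_mem_lang hd _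
  have hs₁' : prefixWord d i₁ ++ w' ∈ Lang d := by
    have h1 : prefixWord d i₁ ∈ Pred d w₁ := hs₁
    rw [hPred] at h1
    exact h1
  have occ' : ∀ j, j < n → ext0 w' j = d (0 + j) := by
    intro j hj
    rw [hw'eq, ext0_pw_lt d hj, Nat.zero_add]
  have hs0 : prefixWord d 0 ++ w₁ ∈ Lang d := by
    have h0 : prefixWord d 0 = ([] : List (Fin m)) := List.ofFn_zero
    rw [h0, List.nil_append]
    exact hw₁
  exact eq_of_dom_both hl₁ hl' (dom_step hd hl₁ hl' occ₁ hs₁') (dom_step hd hl' hl₁ occ' hs0)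

omit hd in
lemma finite_words (n : ℕ) : ({w : List (Fin m) | w.length = n}).Finite := by
  refine Set.Finite.subset (Set.finite_range (fun f : Fin n → Fin m => List.ofFn f)) ?_
  intro w hw
  refine ⟨fun i => w.get (Fin.cast hw.symm i), ?_⟩
  simp only
  refine List.ext_get (by rw [List.length_ofFn]; exact hw.symm) (fun j hj1 hj2 => ?_)
  rw [List.get_ofFn]
  rfl

omit hd in
lemma ncard_prod' {α β : Type*} (s : Set α) (t : Set β) :
    (s ×ˢ t).ncard = s.ncard * t.ncard := by
  rw [← Nat.card_coe_set_eq, ← Nat.card_coe_set_eq, ← Nat.card_coe_set_eq,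
    Nat.card_congr (Equiv.Set.prod s t), Nat.card_prod]

end Stmt18Aux


open BetaShift Stmt18Aux

/-- for non-sofic β-shifts, `|E(n)| ≤ |F(n)| · |P(n)|`. -/
theorem stmt18 (m : ℕ) (hm : 1 ≤ m) (d : ℕ → Fin m) (hd : Admissible d)
    (hnp : ¬ EventuallyPeriodic d) (n : ℕ) (hn : 1 ≤ n) :
    ExtCount d n ≤ FolCount d n * PredCount d n := by
  haveI : NeZero m := ⟨by omega⟩
  classical
  show ({S | ∃ w ∈ Lang d, w.length = n ∧ S = Ext d w}).ncard ≤
    ({S | ∃ w ∈ Lang d, w.length = n ∧ S = Fol d w}).ncard *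
    ({S | ∃ w ∈ Lang d, w.length = n ∧ S = Pred d w}).ncard
  set SE : Set (Set (List (Fin m) × List (Fin m))) :=
    {S | ∃ w ∈ Lang d, w.length = n ∧ S = Ext d w} with hSEdef
  set SF : Set (Set (List (Fin m))) :=
    {S | ∃ w ∈ Lang d, w.length = n ∧ S = Fol d w} with hSFdef
  set SP : Set (Set (List (Fin m))) :=
    {S | ∃ w ∈ Lang d, w.length = n ∧ S = Pred d w} with hSPdef
  -- finiteness of SF and SP
  have hSFfin : SF.Finite := by
    refine Set.Finite.subset (Set.Finite.image (Fol d) (finite_words (m := m) n)) ?_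
    rintro S ⟨w, _, hl, rfl⟩
    exact ⟨w, hl, rfl⟩
  have hSPfin : SP.Finite := by
    refine Set.Finite.subset (Set.Finite.image (Pred d) (finite_words (m := m) n)) ?_
    rintro S ⟨w, _, hl, rfl⟩
    exact ⟨w, hl, rfl⟩
  -- the injection
  set Φ : Set (List (Fin m) × List (Fin m)) → Set (List (Fin m)) × Set (List (Fin m)) :=
    fun S => (if ∃ w₁, w₁ ∈ Lang d ∧ w₁.length = n ∧ S = Ext d w₁ ∧ ActiveW d w₁
        then Fol d (prefixWord d n) else {u | (([] : List (Fin m)), u) ∈ S},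
      {s | (s, ([] : List (Fin m))) ∈ S}) with hΦdef
  have hΦ1 : ∀ S, (Φ S).1 = if ∃ w₁, w₁ ∈ Lang d ∧ w₁.length = n ∧ S = Ext d w₁ ∧ ActiveW d w₁
        then Fol d (prefixWord d n) else {u | (([] : List (Fin m)), u) ∈ S} := fun S => rfl
  have hΦ2 : ∀ S, (Φ S).2 = {s | (s, ([] : List (Fin m))) ∈ S} := fun S => rfl
  have hmaps : ∀ S ∈ SE, Φ S ∈ SF ×ˢ SP := by
    rintro S ⟨w, hw, hl, rfl⟩
    rw [Set.mem_prod]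
    constructor
    · rw [hΦ1]
      by_cases hA : ∃ w₁, w₁ ∈ Lang d ∧ w₁.length = n ∧ Ext d w = Ext d w₁ ∧ ActiveW d w₁
      · rw [if_pos hA]
        exact ⟨prefixWord d n, pw_mem_lang hd n, pw_length d n, rfl⟩
      · rw [if_neg hA, ext_fol]
        exact ⟨w, hw, hl, rfl⟩
    · rw [hΦ2, ext_pred]
      exact ⟨w, hw, hl, rfl⟩
  have hinj : Set.InjOn Φ SE := by
    rintro S hS S' hS' hEq
    obtain ⟨w, hw, hl, rfl⟩ := hS
    obtain ⟨w', hw', hl', rfl⟩ := hS'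
    have hsnd : Pred d w = Pred d w' := by
      rw [← ext_pred (d := d) w, ← ext_pred (d := d) w', ← hΦ2, ← hΦ2, hEq]
    have hfst := congrArg Prod.fst hEq
    rw [hΦ1, hΦ1] at hfst
    by_cases hA : ∃ w₁, w₁ ∈ Lang d ∧ w₁.length = n ∧ Ext d w = Ext d w₁ ∧ ActiveW d w₁
    · by_cases hA' : ∃ w₁, w₁ ∈ Lang d ∧ w₁.length = n ∧ Ext d w' = Ext d w₁ ∧ ActiveW d w₁
      · -- both active
        obtain ⟨w₁, hw₁, hl₁, hE₁, hact₁⟩ := hA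
        obtain ⟨w₂, hw₂, hl₂, hE₂, hact₂⟩ := hA'
        have hP₁ : Pred d w₁ = Pred d w₂ := by
          rw [← ext_pred (d := d) w₁, ← ext_pred (d := d) w₂, ← hE₁, ← hE₂,
            ← ext_pred (d := d) w, ← ext_pred (d := d) w'] at *
          exact hsnd
        have : w₁ = w₂ := caseB hd hw₁ hw₂ hl₁ hl₂ hP₁ hact₁ hact₂
        rw [hE₁, hE₂, this]
      · -- w side active, w' side not
        exfalso
        obtain ⟨w₁, hw₁, hl₁, hE₁, hact₁⟩ := hA
        rw [if_pos ⟨w₁, hw₁, hl₁, hE₁, hact₁⟩, if_neg hA', ext_fol] at hfst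
        have hP₁ : Pred d w₁ = Pred d w' := by
          rw [← ext_pred (d := d) w₁, ← hE₁, ext_pred]
          exact hsnd
        have hww : w₁ = w' := caseC hd hnp hw₁ hl₁ hw' hl' hP₁ hact₁ hfst
        exact hA' ⟨w₁, hw₁, hl₁, by rw [hww], hact₁⟩
    · by_cases hA' : ∃ w₁, w₁ ∈ Lang d ∧ w₁.length = n ∧ Ext d w' = Ext d w₁ ∧ ActiveW d w₁
      · -- w' side active, w side not
        exfalso
        obtain ⟨w₁, hw₁, hl₁, hE₁, hact₁⟩ := hA'
        rw [if_neg hA, if_pos ⟨w₁, hw₁, hl₁, hE₁, hact₁⟩, ext_fol] at hfst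
        have hP₁ : Pred d w₁ = Pred d w := by
          rw [← ext_pred (d := d) w₁, ← hE₁, ext_pred]
          exact hsnd.symm
        have hww : w₁ = w := caseC hd hnp hw₁ hl₁ hw hl hP₁ hact₁ hfst.symm
        exact hA ⟨w₁, hw₁, hl₁, by rw [hww], hact₁⟩
      · -- both inactive
        rw [if_neg hA, if_neg hA', ext_fol, ext_fol] at hfst
        have hNA : ¬ ActiveW d w := fun h => hA ⟨w, hw, hl, rfl, h⟩
        have hNA' : ¬ ActiveW d w' := fun h => hA' ⟨w', hw', hl', rfl, h⟩
        exact caseA hd hnp hw hw' hfst hsnd hNA hNA'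
  calc SE.ncard = (Φ '' SE).ncard := (Set.ncard_image_of_injOn hinj).symm
    _ ≤ (SF ×ˢ SP).ncard := by
        refine Set.ncard_le_ncard ?_ (hSFfin.prod hSPfin)
        rintro _ ⟨S, hS, rfl⟩
        exact hmaps S hS
    _ = SF.ncard * SP.ncard := ncard_prod' SF SP
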